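/- For every n ≥ 1, k ≥ 2 and every (k−1)-tuple σ = (σ_2,…,σ_k) of permutations of {1,…,n}, the Edelman–Jamison lattice E(σ) is a join-distributive lattice of length n whose join-width is at most k. -/

import Mathlib

/-- The initial segment `{σ(1), …, σ(j)}` of a permutation `σ` of `{1,…,n}`
(encoded on `Fin n`), as a finset; for `j = 0` this is `∅`. -/
def iniSeg {n : ℕ} (σ : Equiv.Perm (Fin n)) (j : ℕ) : Finset (Fin n) :=
  (Finset.univ.filter fun m : Fin n => (m : ℕ) < j).image σ

/-- The Edelman–Jamison lattice `E(σ)`: the join-subsemilattice of the powerset of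
`{1,…,n}` (ordered by inclusion, with join `∪`) generated by the initial segments
`{σ_i(1),…,σ_i(j)}`, `1 ≤ i ≤ k`, `0 ≤ j ≤ n`. -/
def EJ {n k : ℕ} (σ : Fin k → Equiv.Perm (Fin n)) : Set (Finset (Fin n)) :=
  supClosure {S | ∃ (i : Fin k) (j : ℕ), j ≤ n ∧ S = iniSeg (σ i) j}

/-- `π`-eligibility of a `k`-tuple `x ∈ {0,…,n}^k`: `π_{ij}(x_i + 1) ≥ x_j + 1` holds
whenever `x_i < n`, where `π_{ij} = π_{1j} ∘ π_{1i}⁻¹` (a value `v ∈ {1,…,n}` is encoded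
as the element `v - 1` of `Fin n`). -/
def Eligible {n k : ℕ} (π : Fin k → Equiv.Perm (Fin n)) (x : Fin k → ℕ) : Prop :=
  (∀ i, x i ≤ n) ∧
    ∀ (i j : Fin k) (h : x i < n), x j + 1 ≤ ((π j) ((π i)⁻¹ ⟨x i, h⟩) : ℕ) + 1

/-- Order-theoretic join-irreducibility: `a` is not minimal, and whenever `a` is the
least upper bound (join) of `b` and `c`, it equals `b` or `c`. -/
def SupIrredOrd {α : Type*} [PartialOrder α] (a : α) : Prop :=
  ¬IsMin a ∧ ∀ b c : α, IsLUB {b, c} a → a = b ∨ a = c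

/-- Order-theoretic join-distributivity: for every non-maximal `x`, writing `u` for the
join `x*` of the upper covers of `x`, the interval `[x, u]` is a distributive lattice;
joins and meets are expressed via `IsLUB`/`IsGLB`. -/
def JoinDistributiveOrd (α : Type*) [PartialOrder α] : Prop :=
  ∀ x u : α, ¬IsMax x → IsLUB {y | x ⋖ y} u →
    ∀ a ∈ Set.Icc x u, ∀ b ∈ Set.Icc x u, ∀ c ∈ Set.Icc x u,
      ∀ bc abc ab ac s : α,
        IsLUB {b, c} bc → IsGLB {a, bc} abc →
        IsGLB {a, b} ab → IsGLB {a, c} ac → IsLUB {ab, ac} s →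
        abc = s


open scoped Classical
noncomputable section

namespace EJAux

variable {n k : ℕ}

/-- Accessibility predicate characterizing membership in `EJ σ`. -/
def Good (σ : Fin k → Equiv.Perm (Fin n)) (A : Finset (Fin n)) : Prop :=
  ∀ b ∈ A, ∃ i : Fin k, ∀ c : Fin n, ((σ i).symm c : ℕ) ≤ ((σ i).symm b : ℕ) → c ∈ A

variable {σ : Fin k → Equiv.Perm (Fin n)}

lemma mem_iniSeg {τ : Equiv.Perm (Fin n)} {j : ℕ} {b : Fin n} :
    b ∈ iniSeg τ j ↔ ((τ.symm b : Fin n) : ℕ) < j := by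
  simp only [iniSeg, Finset.mem_image, Finset.mem_filter, Finset.mem_univ, true_and]
  constructor
  · rintro ⟨m, hm, rfl⟩; simpa using hm
  · intro h; exact ⟨τ.symm b, h, by simp⟩

lemma good_iniSeg (i : Fin k) (j : ℕ) : Good σ (iniSeg (σ i) j) := by
  intro b hb
  exact ⟨i, fun c hc => mem_iniSeg.2 (lt_of_le_of_lt hc (mem_iniSeg.1 hb))⟩

lemma good_empty : Good σ ∅ := by intro b hb; simp at hb

lemma good_union {A B : Finset (Fin n)} (hA : Good σ A) (hB : Good σ B) :
    Good σ (A ∪ B) := by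
  intro b hb
  rcases Finset.mem_union.1 hb with h | h
  · obtain ⟨i, hi⟩ := hA b h
    exact ⟨i, fun c hc => Finset.mem_union_left _ (hi c hc)⟩
  · obtain ⟨i, hi⟩ := hB b h
    exact ⟨i, fun c hc => Finset.mem_union_right _ (hi c hc)⟩

lemma good_sup' {ι : Type*} {t : Finset ι} (ht : t.Nonempty) {f : ι → Finset (Fin n)}
    (hf : ∀ i ∈ t, Good σ (f i)) : Good σ (t.sup' ht f) := by
  induction ht using Finset.Nonempty.cons_induction with
  | singleton a => simpa using hf a (by simp)
  | cons a s ha hs ih =>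
      rw [Finset.sup'_cons hs]
      exact good_union (hf a (Finset.mem_cons_self _ _))
        (ih fun i hi => hf i (Finset.mem_cons_of_mem hi))

lemma supClosed_good : SupClosed {A : Finset (Fin n) | Good σ A} := by
  intro A hA B hB
  exact good_union hA hB

lemma mem_EJ_iff {A : Finset (Fin n)} (hk : 0 < k) : A ∈ EJ σ ↔ Good σ A := by
  constructor
  · intro hA
    refine supClosure_min ?_ supClosed_good hA
    rintro S ⟨i, j, hj, rfl⟩
    exact good_iniSeg i j
  · intro hA
    rcases eq_or_ne A ∅ with rfl | hne
    · exact subset_supClosure ⟨⟨0, hk⟩, 0, Nat.zero_le _, by simp [iniSeg]⟩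
    · have hA' : A.Nonempty := Finset.nonempty_iff_ne_empty.2 hne
      have hw : ∀ b : {x // x ∈ A}, ∃ i : Fin k,
          ∀ c : Fin n, ((σ i).symm c : ℕ) ≤ ((σ i).symm b.1 : ℕ) → c ∈ A :=
        fun b => hA b.1 b.2
      choose w hww using hw
      have hatt : A.attach.Nonempty := Finset.attach_nonempty_iff.2 hA'
      have hval : A = A.attach.sup' hatt
          (fun b => iniSeg (σ (w b)) (((σ (w b)).symm b.1 : ℕ) + 1)) := by
        apply le_antisymm
        · intro b hb
          have h1 := Finset.le_sup' (b := ⟨b, hb⟩)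
            (fun b : {x // x ∈ A} => iniSeg (σ (w b)) (((σ (w b)).symm b.1 : ℕ) + 1))
            (Finset.mem_attach A ⟨b, hb⟩)
          exact Finset.le_iff_subset.1 h1 (mem_iniSeg.2 (Nat.lt_succ_self _))
        · refine Finset.sup'_le _ _ ?_
          intro b _ c hc
          exact hww b c (Nat.lt_succ_iff.1 (mem_iniSeg.1 hc))
      rw [hval]
      refine finsetSup'_mem_supClosure _ ?_
      intro b _
      refine ⟨w b, ((σ (w b)).symm b.1 : ℕ) + 1, ?_, rfl⟩
      exact Nat.succ_le_of_lt ((σ (w b)).symm b.1).2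

end EJAux

namespace EJAux

variable {n k : ℕ} {σ : Fin k → Equiv.Perm (Fin n)}

/-- The exchange property: a feasible set strictly inside another can be grown by one element. -/
lemma exchange {x y : Finset (Fin n)} (hx : Good σ x) (hy : Good σ y) (hxy : x ⊂ y) :
    ∃ a ∈ y, a ∉ x ∧ Good σ (insert a x) := by
  classical
  set P : Fin n × Fin k → Prop := fun p =>
    p.1 ∈ y ∧ p.1 ∉ x ∧ ∀ c : Fin n, ((σ p.2).symm c : ℕ) ≤ ((σ p.2).symm p.1 : ℕ) → c ∈ y
    with hP
  set s : Finset (Fin n × Fin k) := Finset.univ.filter P with hs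
  have hsne : s.Nonempty := by
    obtain ⟨b, hby, hbx⟩ := Finset.exists_of_ssubset hxy
    obtain ⟨i, hi⟩ := hy b hby
    exact ⟨(b, i), Finset.mem_filter.2 ⟨Finset.mem_univ _, hby, hbx, hi⟩⟩
  obtain ⟨p, hp, hmin⟩ := s.exists_min_image (fun p => ((σ p.2).symm p.1 : ℕ)) hsne
  have hpP : P p := (Finset.mem_filter.1 hp).2
  refine ⟨p.1, hpP.1, hpP.2.1, ?_⟩
  intro b hb
  rcases Finset.mem_insert.1 hb with rfl | hbx
  · -- b = p.1 : use index p.2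
    refine ⟨p.2, fun c hc => ?_⟩
    rcases eq_or_ne c p.1 with rfl | hcb
    · exact Finset.mem_insert_self _ _
    · have hclt : ((σ p.2).symm c : ℕ) < ((σ p.2).symm p.1 : ℕ) := by
        rcases lt_or_eq_of_le hc with h | h
        · exact h
        · exact absurd ((σ p.2).symm.injective (Fin.val_injective h)) hcb
      have hcy : c ∈ y := hpP.2.2 c hc
      by_contra hcx
      have hcins : c ∉ x := fun h => hcx (Finset.mem_insert_of_mem h)
      have hmem : (c, p.2) ∈ s := by
        refine Finset.mem_filter.2 ⟨Finset.mem_univ _, hcy, hcins, fun d hd => ?_⟩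
        exact hpP.2.2 d (le_trans hd hc)
      have h3 : ((σ p.2).symm p.1 : ℕ) ≤ ((σ p.2).symm c : ℕ) := hmin (c, p.2) hmem
      omega
  · obtain ⟨i, hi⟩ := hx b hbx
    exact ⟨i, fun c hc => Finset.mem_insert_of_mem (hi c hc)⟩

lemma good_union_ins {x S : Finset (Fin n)} (hx : Good σ x)
    (hS : ∀ a ∈ S, Good σ (insert a x)) : Good σ (x ∪ S) := by
  intro b hb
  rcases Finset.mem_union.1 hb with h | h
  · obtain ⟨i, hi⟩ := hx b h
    exact ⟨i, fun c hc => Finset.mem_union_left _ (hi c hc)⟩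
  · obtain ⟨i, hi⟩ := hS b h b (Finset.mem_insert_self _ _)
    refine ⟨i, fun c hc => ?_⟩
    rcases Finset.mem_insert.1 (hi c hc) with rfl | hcx
    · exact Finset.mem_union_right _ h
    · exact Finset.mem_union_left _ hcx

variable (σ) in
/-- The set of feasible one-element extensions of `x`. -/
def Ext (x : Finset (Fin n)) : Finset (Fin n) :=
  Finset.univ.filter fun a => a ∉ x ∧ Good σ (insert a x)

lemma mem_Ext {x : Finset (Fin n)} {a : Fin n} :
    a ∈ Ext σ x ↔ a ∉ x ∧ Good σ (insert a x) := by
  simp [Ext]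

lemma subtype_le_iff {a b : ↥(EJ σ)} : a ≤ b ↔ a.1 ⊆ b.1 := Iff.rfl

lemma subtype_lt_iff {a b : ↥(EJ σ)} : a < b ↔ a.1 ⊂ b.1 := by
  rw [lt_iff_le_not_ge, Finset.ssubset_iff_subset_ne]
  constructor
  · rintro ⟨h1, h2⟩
    exact ⟨h1, fun h => h2 (by rw [subtype_le_iff, h])⟩
  · rintro ⟨h1, h2⟩
    exact ⟨h1, fun h => h2 (le_antisymm h1 h)⟩

lemma covby_iff (hk : 0 < k) {x y : ↥(EJ σ)} :
    x ⋖ y ↔ ∃ a ∈ Ext σ x.1, y.1 = insert a x.1 := by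
  constructor
  · intro h
    have hlt : x.1 ⊂ y.1 := subtype_lt_iff.1 h.1
    obtain ⟨a, hay, hax, hgood⟩ :=
      exchange ((mem_EJ_iff hk).1 x.2) ((mem_EJ_iff hk).1 y.2) hlt
    have hzmem : insert a x.1 ∈ EJ σ := (mem_EJ_iff hk).2 hgood
    set z : ↥(EJ σ) := ⟨insert a x.1, hzmem⟩ with hz
    have hxz : x < z := subtype_lt_iff.2 (Finset.ssubset_insert hax)
    have hzy : z ≤ y := subtype_le_iff.2 (Finset.insert_subset hay hlt.1)
    have : z = y := by
      by_contra hne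
      exact h.2 hxz (lt_of_le_of_ne hzy hne)
    exact ⟨a, mem_Ext.2 ⟨hax, hgood⟩, by rw [← this]⟩
  · rintro ⟨a, ha, hy⟩
    obtain ⟨hax, hgood⟩ := mem_Ext.1 ha
    constructor
    · exact subtype_lt_iff.2 (by rw [hy]; exact Finset.ssubset_insert hax)
    · intro c hxc hcy
      have h1 : x.1 ⊂ c.1 := subtype_lt_iff.1 hxc
      have h2 : c.1 ⊂ y.1 := subtype_lt_iff.1 hcy
      obtain ⟨b, hbc, hbx⟩ := Finset.exists_of_ssubset h1
      have hba : b = a := by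
        have := h2.1 hbc
        rw [hy] at this
        rcases Finset.mem_insert.1 this with h | h
        · exact h
        · exact absurd h hbx
      have : y.1 ⊆ c.1 := by
        rw [hy]
        exact Finset.insert_subset (hba ▸ hbc) h1.1
      exact (h2.not_subset) this

end EJAux

namespace EJAux

variable {n k : ℕ} {σ : Fin k → Equiv.Perm (Fin n)}

lemma union_mem (a b : ↥(EJ σ)) : a.1 ∪ b.1 ∈ EJ σ := by
  have h := supClosed_supClosure (s := {S | ∃ (i : Fin k) (j : ℕ), j ≤ n ∧ S = iniSeg (σ i) j})
    a.2 b.2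
  rwa [Finset.sup_eq_union] at h

lemma isLUB_pair (a b : ↥(EJ σ)) : IsLUB {a, b} (⟨a.1 ∪ b.1, union_mem a b⟩ : ↥(EJ σ)) := by
  constructor
  · intro c hc
    simp only [Set.mem_insert_iff, Set.mem_singleton_iff] at hc
    rcases hc with rfl | rfl
    · exact subtype_le_iff.2 Finset.subset_union_left
    · exact subtype_le_iff.2 Finset.subset_union_right
  · intro c hc
    have h1 : a ≤ c := hc (by simp)
    have h2 : b ≤ c := hc (by simp)
    exact subtype_le_iff.2 (Finset.union_subset (subtype_le_iff.1 h1) (subtype_le_iff.1 h2))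

variable (σ) in
def glbFin (a b : Finset (Fin n)) : Finset (Fin n) :=
  ((a ∩ b).powerset.filter (Good σ)).sup id

lemma good_glbFin (a b : Finset (Fin n)) : Good σ (glbFin σ a b) := by
  refine Finset.sup_induction ?_ ?_ ?_
  · exact good_empty
  · exact fun s hs t ht => good_union hs ht
  · intro S hS
    exact (Finset.mem_filter.1 hS).2

lemma glbFin_subset (a b : Finset (Fin n)) : glbFin σ a b ⊆ a ∩ b := by
  have h : glbFin σ a b ≤ a ∩ b := by
    refine Finset.sup_le ?_
    intro S hS
    exact Finset.le_iff_subset.2 (Finset.mem_powerset.1 (Finset.mem_filter.1 hS).1)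
  exact Finset.le_iff_subset.1 h

lemma subset_glbFin {a b c : Finset (Fin n)} (hc : Good σ c) (h1 : c ⊆ a) (h2 : c ⊆ b) :
    c ⊆ glbFin σ a b :=
  Finset.le_iff_subset.1 (Finset.le_sup (f := id)
    (Finset.mem_filter.2 ⟨Finset.mem_powerset.2 (Finset.subset_inter h1 h2), hc⟩))

lemma isGLB_pair (hk : 0 < k) (a b : ↥(EJ σ)) :
    IsGLB {a, b} (⟨glbFin σ a.1 b.1, (mem_EJ_iff hk).2 (good_glbFin a.1 b.1)⟩ : ↥(EJ σ)) := by
  constructor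
  · intro c hc
    simp only [Set.mem_insert_iff, Set.mem_singleton_iff] at hc
    rcases hc with rfl | rfl
    · exact subtype_le_iff.2 fun t ht => (Finset.mem_inter.1 (glbFin_subset _ _ ht)).1
    · exact subtype_le_iff.2 fun t ht => (Finset.mem_inter.1 (glbFin_subset _ _ ht)).2
  · intro c hc
    have h1 : c ≤ a := hc (by simp)
    have h2 : c ≤ b := hc (by simp)
    exact subtype_le_iff.2
      (subset_glbFin ((mem_EJ_iff hk).1 c.2) (subtype_le_iff.1 h1) (subtype_le_iff.1 h2))

lemma isGLB_inter (hk : 0 < k) (a b : ↥(EJ σ)) (h : Good σ (a.1 ∩ b.1)) :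
    IsGLB {a, b} (⟨a.1 ∩ b.1, (mem_EJ_iff hk).2 h⟩ : ↥(EJ σ)) := by
  constructor
  · intro c hc
    simp only [Set.mem_insert_iff, Set.mem_singleton_iff] at hc
    rcases hc with rfl | rfl
    · exact subtype_le_iff.2 Finset.inter_subset_left
    · exact subtype_le_iff.2 Finset.inter_subset_right
  · intro c hc
    have h1 : c ≤ a := hc (by simp)
    have h2 : c ≤ b := hc (by simp)
    exact subtype_le_iff.2 (Finset.subset_inter (subtype_le_iff.1 h1) (subtype_le_iff.1 h2))

end EJAux

namespace EJAux

variable {n k : ℕ} {σ : Fin k → Equiv.Perm (Fin n)}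

lemma joinDistributive (hk : 0 < k) : JoinDistributiveOrd ↥(EJ σ) := by
  intro x u hmax hu a ha b hb c hc bc abc ab ac s hbc habc hab hac hs
  obtain ⟨y, hy⟩ := not_isMax_iff.1 hmax
  obtain ⟨a₀, ha₀y, ha₀x, hg₀⟩ :=
    exchange ((mem_EJ_iff hk).1 x.2) ((mem_EJ_iff hk).1 y.2) (subtype_lt_iff.1 hy)
  have hExtGood : Good σ (x.1 ∪ Ext σ x.1) :=
    good_union_ins ((mem_EJ_iff hk).1 x.2) (fun d hd => (mem_Ext.1 hd).2)
  set u' : ↥(EJ σ) := ⟨x.1 ∪ Ext σ x.1, (mem_EJ_iff hk).2 hExtGood⟩ with hu'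
  have hu'lub : IsLUB {y | x ⋖ y} u' := by
    constructor
    · intro z hz
      obtain ⟨d, hd, hzval⟩ := (covby_iff hk).1 hz
      refine subtype_le_iff.2 ?_
      rw [hzval]
      exact Finset.insert_subset (Finset.mem_union_right _ hd) Finset.subset_union_left
    · intro w hw
      have hxw : x.1 ⊆ w.1 := by
        have hc0 : x ⋖ (⟨insert a₀ x.1, (mem_EJ_iff hk).2 hg₀⟩ : ↥(EJ σ)) :=
          (covby_iff hk).2 ⟨a₀, mem_Ext.2 ⟨ha₀x, hg₀⟩, rfl⟩
        exact subset_trans (Finset.subset_insert _ _) (subtype_le_iff.1 (hw hc0))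
      refine subtype_le_iff.2 (Finset.union_subset hxw ?_)
      intro d hd
      have hcd : x ⋖ (⟨insert d x.1, (mem_EJ_iff hk).2 (mem_Ext.1 hd).2⟩ : ↥(EJ σ)) :=
        (covby_iff hk).2 ⟨d, hd, rfl⟩
      exact subtype_le_iff.1 (hw hcd) (Finset.mem_insert_self _ _)
  have huu : u = u' := hu.unique hu'lub
  have hIccGood : ∀ p q : ↥(EJ σ), p ∈ Set.Icc x u → q ∈ Set.Icc x u →
      Good σ (p.1 ∩ q.1) := by
    intro p q hp hq
    have hxp : x.1 ⊆ p.1 := subtype_le_iff.1 hp.1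
    have hxq : x.1 ⊆ q.1 := subtype_le_iff.1 hq.1
    have hpu : p.1 ⊆ x.1 ∪ Ext σ x.1 := by
      have h := hp.2
      rw [huu] at h
      exact subtype_le_iff.1 h
    have heq : x.1 ∪ ((p.1 ∩ q.1) \ x.1) = p.1 ∩ q.1 :=
      Finset.union_sdiff_of_subset (Finset.subset_inter hxp hxq)
    rw [← heq]
    refine good_union_ins ((mem_EJ_iff hk).1 x.2) ?_
    intro d hd
    have hdp : d ∈ p.1 := (Finset.mem_inter.1 (Finset.mem_sdiff.1 hd).1).1
    have hdx : d ∉ x.1 := (Finset.mem_sdiff.1 hd).2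
    have hdext : d ∈ Ext σ x.1 := by
      rcases Finset.mem_union.1 (hpu hdp) with h | h
      · exact absurd h hdx
      · exact h
    exact (mem_Ext.1 hdext).2
  have hbc' := hbc.unique (isLUB_pair b c)
  have hbcval : bc.1 = b.1 ∪ c.1 := congrArg Subtype.val hbc'
  have hbcIcc : bc ∈ Set.Icc x u := by
    constructor
    · exact le_trans hb.1 (hbc.1 (by simp))
    · refine hbc.2 ?_
      intro z hz
      simp only [Set.mem_insert_iff, Set.mem_singleton_iff] at hz
      rcases hz with rfl | rfl
      · exact hb.2
      · exact hc.2
  have habcval : abc.1 = a.1 ∩ bc.1 :=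
    congrArg Subtype.val (habc.unique (isGLB_inter hk a bc (hIccGood a bc ha hbcIcc)))
  have habval : ab.1 = a.1 ∩ b.1 :=
    congrArg Subtype.val (hab.unique (isGLB_inter hk a b (hIccGood a b ha hb)))
  have hacval : ac.1 = a.1 ∩ c.1 :=
    congrArg Subtype.val (hac.unique (isGLB_inter hk a c (hIccGood a c ha hc)))
  have hsval : s.1 = ab.1 ∪ ac.1 := congrArg Subtype.val (hs.unique (isLUB_pair ab ac))
  apply Subtype.ext
  rw [habcval, hbcval, hsval, habval, hacval]
  exact Finset.inter_union_distrib_left ..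

end EJAux

namespace EJAux

variable {n k : ℕ} {σ : Fin k → Equiv.Perm (Fin n)}

lemma iniSeg_mem (i : Fin k) {j : ℕ} (hj : j ≤ n) : iniSeg (σ i) j ∈ EJ σ :=
  subset_supClosure ⟨i, j, hj, rfl⟩

lemma mem_iniSeg_one {j : ℕ} {b : Fin n} : b ∈ iniSeg (1 : Equiv.Perm (Fin n)) j ↔ (b : ℕ) < j := by
  rw [mem_iniSeg]; rfl

lemma krull (hk : 0 < k) (hσ : σ ⟨0, hk⟩ = 1) : Order.krullDim ↥(EJ σ) = n := by
  have hne : Nonempty ↥(EJ σ) := ⟨⟨iniSeg (σ ⟨0, hk⟩) 0, iniSeg_mem _ (Nat.zero_le _)⟩⟩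
  have hub : ∀ p : LTSeries ↥(EJ σ), p.length ≤ n := by
    intro p
    have key : ∀ m : ℕ, ∀ hm : m ≤ p.length, m ≤ (p ⟨m, Nat.lt_succ_of_le hm⟩).1.card := by
      intro m
      induction m with
      | zero => intro hm; exact Nat.zero_le _
      | succ m ih =>
        intro hm
        have h1 := ih (le_of_lt (Nat.lt_of_succ_le hm))
        have hlt : p ⟨m, by omega⟩ < p ⟨m + 1, by omega⟩ :=
          p.strictMono (by simp [Fin.lt_def])
        have h2 := Finset.card_lt_card (subtype_lt_iff.1 hlt)
        omega
    have h1 := key p.length le_rfl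
    have h2 : (p ⟨p.length, Nat.lt_succ_self _⟩).1.card ≤ n := by
      refine le_trans (Finset.card_le_univ _) (by simp)
    omega
  refine le_antisymm ?_ ?_
  · rw [Order.krullDim_eq_iSup_length]
    have : (⨆ p : LTSeries ↥(EJ σ), (p.length : ℕ∞)) ≤ (n : ℕ∞) :=
      iSup_le fun p => by exact_mod_cast hub p
    exact_mod_cast this
  · have hstep : ∀ i : Fin n,
        (⟨iniSeg (σ ⟨0, hk⟩) (i.castSucc : ℕ), iniSeg_mem _ (by omega)⟩ : ↥(EJ σ)) <
        ⟨iniSeg (σ ⟨0, hk⟩) (i.succ : ℕ), iniSeg_mem _ (by omega)⟩ := by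
      intro i
      rw [subtype_lt_iff]
      show iniSeg (σ ⟨0, hk⟩) (i.castSucc : ℕ) ⊂ iniSeg (σ ⟨0, hk⟩) (i.succ : ℕ)
      rw [hσ]
      constructor
      · intro b hb
        rw [mem_iniSeg_one] at hb ⊢
        simp only [Fin.coe_castSucc] at hb
        simp only [Fin.val_succ]
        omega
      · intro hsub
        have hmem : i ∈ iniSeg (1 : Equiv.Perm (Fin n)) (i.succ : ℕ) := by
          rw [mem_iniSeg_one]; simp
        have := hsub hmem
        rw [mem_iniSeg_one] at this
        simp at this
    set q : LTSeries ↥(EJ σ) :=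
      ⟨n, fun i => ⟨iniSeg (σ ⟨0, hk⟩) (i : ℕ), iniSeg_mem _ (by omega)⟩, hstep⟩ with hq
    have hlen := Order.LTSeries.length_le_krullDim q
    exact_mod_cast hlen

end EJAux

namespace EJAux

variable {n k : ℕ} {σ : Fin k → Equiv.Perm (Fin n)}

lemma irred_sup' {ι : Type*} (hk : 0 < k) (a : ↥(EJ σ)) (hirr : SupIrredOrd a)
    (t : Finset ι) (ht : t.Nonempty) (f : ι → Finset (Fin n))
    (hf : ∀ i ∈ t, Good σ (f i)) (hval : a.1 = t.sup' ht f) : ∃ i ∈ t, a.1 = f i := by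
  induction ht using Finset.Nonempty.cons_induction with
  | singleton i => exact ⟨i, by simp, by simpa using hval⟩
  | cons i t hit hne ih =>
    rw [Finset.sup'_cons hne] at hval
    set P : ↥(EJ σ) := ⟨f i, (mem_EJ_iff hk).2 (hf i (Finset.mem_cons_self i t))⟩ with hP
    set Q : ↥(EJ σ) := ⟨t.sup' hne f,
      (mem_EJ_iff hk).2 (good_sup' hne fun j hj => hf j (Finset.mem_cons_of_mem hj))⟩ with hQ
    have hlub : IsLUB {P, Q} a := by
      constructor
      · intro z hz
        simp only [Set.mem_insert_iff, Set.mem_singleton_iff] at hz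
        rcases hz with rfl | rfl
        · exact subtype_le_iff.2 (Finset.le_iff_subset.1 (hval ▸ le_sup_left))
        · exact subtype_le_iff.2 (Finset.le_iff_subset.1 (hval ▸ le_sup_right))
      · intro w hw
        have h1 : P ≤ w := hw (by simp)
        have h2 : Q ≤ w := hw (by simp)
        refine subtype_le_iff.2 (Finset.le_iff_subset.1 ?_)
        rw [hval]
        exact sup_le (Finset.le_iff_subset.2 (subtype_le_iff.1 h1))
          (Finset.le_iff_subset.2 (subtype_le_iff.1 h2))
    rcases hirr.2 P Q hlub with h | h
    · exact ⟨i, Finset.mem_cons_self i t, congrArg Subtype.val h⟩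
    · obtain ⟨j, hj, hval'⟩ := ih (fun j hj => hf j (Finset.mem_cons_of_mem hj))
        (congrArg Subtype.val h)
      exact ⟨j, Finset.mem_cons_of_mem hj, hval'⟩

lemma irred_iniSeg (hk : 0 < k) (a : ↥(EJ σ)) (hirr : SupIrredOrd a) :
    ∃ (i : Fin k) (j : ℕ), a.1 = iniSeg (σ i) j := by
  have hgood := (mem_EJ_iff hk).1 a.2
  have hne : a.1.Nonempty := by
    rw [Finset.nonempty_iff_ne_empty]
    intro hval
    refine hirr.1 ?_
    intro b _
    exact subtype_le_iff.2 (by rw [hval]; exact Finset.empty_subset _)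
  choose w hww using fun b : {x // x ∈ a.1} => hgood b.1 b.2
  have hatt : a.1.attach.Nonempty := Finset.attach_nonempty_iff.2 hne
  have hval : a.1 = a.1.attach.sup' hatt
      (fun b => iniSeg (σ (w b)) (((σ (w b)).symm b.1 : ℕ) + 1)) := by
    apply le_antisymm
    · intro b hb
      have h1 := Finset.le_sup' (b := ⟨b, hb⟩)
        (fun b : {x // x ∈ a.1} => iniSeg (σ (w b)) (((σ (w b)).symm b.1 : ℕ) + 1))
        (Finset.mem_attach a.1 ⟨b, hb⟩)
      exact Finset.le_iff_subset.1 h1 (mem_iniSeg.2 (Nat.lt_succ_self _))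
    · refine Finset.sup'_le _ _ ?_
      intro b _ c hc
      exact hww b c (Nat.lt_succ_iff.1 (mem_iniSeg.1 hc))
  obtain ⟨b, _, hv⟩ := irred_sup' hk a hirr _ hatt _ (fun b _ => good_iniSeg _ _) hval
  exact ⟨w b, _, hv⟩

lemma antichain_card (hk : 0 < k) (A : Finset ↥(EJ σ))
    (hA : IsAntichain (· ≤ ·) (A : Set ↥(EJ σ))) (hirr : ∀ a ∈ A, SupIrredOrd a) :
    A.card ≤ k := by
  classical
  have hfin : ∀ a : ↥(EJ σ), ∃ i : Fin k,
      (a ∈ A ∧ SupIrredOrd a) → ∃ j, a.1 = iniSeg (σ i) j := by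
    intro a
    by_cases h : a ∈ A ∧ SupIrredOrd a
    · obtain ⟨i, j, hij⟩ := irred_iniSeg hk a h.2
      exact ⟨i, fun _ => ⟨j, hij⟩⟩
    · exact ⟨⟨0, hk⟩, fun h' => absurd h' h⟩
  choose g hg using hfin
  have hcard : A.card ≤ (Finset.univ : Finset (Fin k)).card := by
    refine Finset.card_le_card_of_injOn g (fun a _ => Finset.mem_univ _) ?_
    intro a ha b hb hgab
    have haA : a ∈ A := ha
    have hbA : b ∈ A := hb
    obtain ⟨ja, hja⟩ := hg a ⟨haA, hirr a haA⟩
    obtain ⟨jb, hjb⟩ := hg b ⟨hbA, hirr b hbA⟩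
    by_contra hne
    have hcomp : a ≤ b ∨ b ≤ a := by
      rcases le_total ja jb with h | h
      · left
        refine subtype_le_iff.2 ?_
        rw [hja, hjb, ← hgab]
        intro c hc
        rw [mem_iniSeg] at hc ⊢
        omega
      · right
        refine subtype_le_iff.2 ?_
        rw [hjb, hja, hgab]
        intro c hc
        rw [mem_iniSeg] at hc ⊢
        omega
    rcases hcomp with h | h
    · exact hA ha hb hne h
    · exact hA hb ha (Ne.symm hne) h
  simpa using hcard

end EJAux


end

/-- For every `n ≥ 1`, `k ≥ 2` and every `(k-1)`-tuple `σ = (σ_2,…,σ_k)`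
of permutations of `{1,…,n}` (encoded with `σ 0 = id` playing the role of `σ_1`), the
Edelman–Jamison poset `E(σ)` (ordered by inclusion) is a lattice, it is join-distributive,
its length is `n`, and its join-width is at most `k` (every antichain of join-irreducible
elements has at most `k` elements). -/
theorem statement4 (n k : ℕ) (hn : 1 ≤ n) (hk : 2 ≤ k)
    (σ : Fin k → Equiv.Perm (Fin n)) (hσ : σ ⟨0, by omega⟩ = 1) :
    (∀ a b : EJ σ, (∃ s, IsLUB {a, b} s) ∧ (∃ t, IsGLB {a, b} t)) ∧
    JoinDistributiveOrd (EJ σ) ∧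
    Order.krullDim (EJ σ) = n ∧
    ∀ A : Finset (EJ σ), IsAntichain (· ≤ ·) (A : Set (EJ σ)) →
      (∀ a ∈ A, SupIrredOrd a) → A.card ≤ k := by
  have hk0 : 0 < k := by omega
  refine ⟨?_, ?_, ?_, ?_⟩
  · intro a b
    exact ⟨⟨_, EJAux.isLUB_pair a b⟩, ⟨_, EJAux.isGLB_pair hk0 a b⟩⟩
  · exact EJAux.joinDistributive hk0
  · exact EJAux.krull hk0 hσ
  · intro A hA hirr
    exact EJAux.antichain_card hk0 A hA hirr
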